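/- If E[V − τ] < 0, then M_∞ < ∞ P-almost surely; that is, P( sup_{j≥1} ( σ∘θ^{-j} + D∘θ^{-j} + Σ_{i=1}^{j} V∘θ^{-i} − Σ_{i=1}^{j} τ∘θ^{-i} ) < ∞ ) = 1. -/

import Mathlib

open MeasureTheory Filter

noncomputable section

variable {Ω : Type*}

/-- ψ(y, ω) = max( max( y + V ω, σ ω + D ω + V ω ) − τ ω, 0 ). -/
def psi (σ D V τ : Ω → ℝ) (y : ℝ) (ω : Ω) : ℝ :=
  max (max (y + V ω) (σ ω + D ω + V ω) - τ ω) 0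

/-- S_j(ω) = σ(θ^{-j}ω) + D(θ^{-j}ω) + Σ_{i=1}^{j} V(θ^{-i}ω) − Σ_{i=1}^{j} τ(θ^{-i}ω),
where `θi` denotes the inverse of `θ`. -/
def Sj (θi : Ω → Ω) (σ D V τ : Ω → ℝ) (j : ℕ) (ω : Ω) : ℝ :=
  σ (θi^[j] ω) + D (θi^[j] ω)
    + ∑ i ∈ Finset.Icc 1 j, V (θi^[i] ω)
    - ∑ i ∈ Finset.Icc 1 j, τ (θi^[i] ω)

/-- Loynes sequence: M_0 = 0 and M_n = max(0, max_{1 ≤ j ≤ n} S_j). -/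
def Mn (θi : Ω → Ω) (σ D V τ : Ω → ℝ) (n : ℕ) (ω : Ω) : ℝ :=
  (Finset.Icc 1 n).fold max 0 (fun j => Sj θi σ D V τ j ω)

/-- M_∞ = max(0, sup_{j ≥ 1} S_j) ∈ [0,∞]. -/
def Minf (θi : Ω → Ω) (σ D V τ : Ω → ℝ) (ω : Ω) : EReal :=
  max 0 (⨆ j : ℕ, ((Sj θi σ D V τ (j + 1) ω : ℝ) : EReal))


set_option linter.unusedSectionVars false
set_option linter.unusedVariables false

open MeasureTheory Filter

noncomputable section

namespace LoynesAux

variable {Ω : Type*} [MeasurableSpace Ω]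

/-- Birkhoff sums of `g` along `T`. -/
def Sg (T : Ω → Ω) (g : Ω → ℝ) (n : ℕ) (ω : Ω) : ℝ :=
  ∑ i ∈ Finset.range n, g (T^[i] ω)

/-- Running maxima `max (0, S_1, …, S_n)`. -/
def Phi (T : Ω → Ω) (g : Ω → ℝ) : ℕ → Ω → ℝ
  | 0, _ => 0
  | n + 1, ω => max (Phi T g n ω) (Sg T g (n + 1) ω)

variable {T : Ω → Ω} {g : Ω → ℝ}

lemma Sg_zero (ω : Ω) : Sg T g 0 ω = 0 := by simp [Sg]

lemma Sg_succ' (n : ℕ) (ω : Ω) : Sg T g (n + 1) ω = g ω + Sg T g n (T ω) := by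
  unfold Sg
  rw [Finset.sum_range_succ']
  simp only [Function.iterate_succ_apply, Function.iterate_zero_apply]
  exact add_comm _ _

lemma Phi_nonneg : ∀ n ω, 0 ≤ Phi T g n ω
  | 0, ω => le_refl 0
  | n + 1, ω => le_trans (Phi_nonneg n ω) (le_max_left _ _)

lemma Phi_le_succ (n : ℕ) (ω : Ω) : Phi T g n ω ≤ Phi T g (n + 1) ω := le_max_left _ _

lemma Sg_le_Phi : ∀ n k, k ≤ n → ∀ ω : Ω, Sg T g k ω ≤ Phi T g n ω
  | 0, k, hk, ω => by
    interval_cases k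
    simp [Sg, Phi]
  | n + 1, k, hk, ω => by
    rcases Nat.lt_or_ge k (n + 1) with h | h
    · exact le_trans (Sg_le_Phi n k (Nat.lt_succ_iff.mp h) ω) (Phi_le_succ n ω)
    · have : k = n + 1 := le_antisymm hk h
      subst this
      exact le_max_right _ _

lemma Phi_le : ∀ n (ω : Ω), Phi T g n ω ≤ max 0 (g ω + Phi T g n (T ω))
  | 0, ω => le_max_left _ _
  | n + 1, ω => by
    apply max_le
    · exact le_trans (Phi_le n ω)
        (max_le_max le_rfl (add_le_add le_rfl (Phi_le_succ n (T ω))))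
    · rw [Sg_succ']
      exact le_max_of_le_right (add_le_add le_rfl (Sg_le_Phi (n + 1) n n.le_succ (T ω)))

lemma Sg_meas (hTm : Measurable T) (hgm : Measurable g) (n : ℕ) :
    Measurable (Sg T g n) := by
  unfold Sg
  exact Finset.measurable_sum _ fun i _ => hgm.comp (hTm.iterate i)

lemma Phi_meas (hTm : Measurable T) (hgm : Measurable g) :
    ∀ n, Measurable (Phi T g n)
  | 0 => measurable_const
  | n + 1 => (Phi_meas hTm hgm n).max (Sg_meas hTm hgm (n + 1))

lemma Sg_int {P : Measure Ω} (hT : MeasurePreserving T P P) (hgm : Measurable g)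
    (hgi : Integrable g P) (n : ℕ) :
    Integrable (Sg T g n) P := by
  unfold Sg
  exact integrable_finset_sum _ fun i _ => (hT.iterate i).integrable_comp hgm.aestronglyMeasurable |>.mpr hgi

lemma Phi_int {P : Measure Ω} [IsFiniteMeasure P] (hT : MeasurePreserving T P P)
    (hgm : Measurable g) (hgi : Integrable g P) :
    ∀ n, Integrable (Phi T g n) P
  | 0 => integrable_const 0
  | n + 1 => by
    have h1 := Phi_int hT hgm hgi n
    have h2 := Sg_int hT hgm hgi (n + 1)
    have := h1.sup h2
    convert this using 1
    funext ω; rfl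

/-- Garsia's maximal ergodic inequality. -/
lemma maximal (P : Measure Ω) [IsProbabilityMeasure P]
    (hTm : Measurable T) (hT : MeasurePreserving T P P)
    (hgm : Measurable g) (hgi : Integrable g P) (n : ℕ) :
    0 ≤ ∫ ω in {ω | 0 < Phi T g n ω}, g ω ∂P := by
  set E : Set Ω := {ω | 0 < Phi T g n ω} with hEdef
  have hEm : MeasurableSet E := measurableSet_lt measurable_const (Phi_meas hTm hgm n)
  have hPhiInt : Integrable (Phi T g n) P := Phi_int hT hgm hgi n
  have hPhiTInt : Integrable (fun ω => Phi T g n (T ω)) P :=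
    (hT.integrable_comp (Phi_meas hTm hgm n).aestronglyMeasurable).mpr hPhiInt
  set F : Ω → ℝ := fun ω => Phi T g n ω - Phi T g n (T ω) with hFdef
  have hFint : Integrable F P := hPhiInt.sub hPhiTInt
  have hint0 : ∫ ω, F ω ∂P = 0 := by
    rw [hFdef]
    simp only
    rw [integral_sub hPhiInt hPhiTInt]
    have h1 : ∫ ω, Phi T g n (T ω) ∂P = ∫ ω, Phi T g n ω ∂(P.map T) :=
      (integral_map hTm.aemeasurable
        (by rw [hT.map_eq]; exact (Phi_meas hTm hgm n).aestronglyMeasurable)).symm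
    rw [h1, hT.map_eq, sub_self]
  have hsplit : (∫ ω in E, F ω ∂P) + (∫ ω in Eᶜ, F ω ∂P) = ∫ ω, F ω ∂P :=
    integral_add_compl hEm hFint
  have hcompl : ∫ ω in Eᶜ, F ω ∂P ≤ 0 := by
    refine setIntegral_nonpos hEm.compl fun ω hω => ?_
    have h0 : Phi T g n ω ≤ 0 := le_of_not_gt hω
    have h1 : Phi T g n ω = 0 := le_antisymm h0 (Phi_nonneg n ω)
    simp only [hFdef, h1, zero_sub, neg_nonpos]
    exact Phi_nonneg n (T ω)
  have hEF : 0 ≤ ∫ ω in E, F ω ∂P := by linarith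
  have hmono : ∫ ω in E, F ω ∂P ≤ ∫ ω in E, g ω ∂P := by
    refine setIntegral_mono_on hFint.integrableOn hgi.integrableOn hEm fun ω hω => ?_
    have hpos : 0 < Phi T g n ω := hω
    rcases le_max_iff.mp (Phi_le n ω) with h | h
    · linarith
    · simp only [hFdef]; linarith
  linarith

/-- Under negative drift, the Birkhoff sums along `θ⁻¹` are a.s. bounded above. -/
lemma bddAbove_Sg (P : Measure Ω) [IsProbabilityMeasure P]
    (θ : Ω ≃ᵐ Ω) (herg : Ergodic (⇑θ) P)
    (hgm : Measurable g) (hgi : Integrable g P) (hneg : ∫ ω, g ω ∂P < 0) :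
    ∀ᵐ ω ∂P, ∃ c : ℝ, ∀ n, Sg (⇑θ.symm) g n ω ≤ c := by
  set T : Ω → Ω := ⇑θ.symm with hTdef
  have hTm : Measurable T := θ.symm.measurable
  have hT : MeasurePreserving T P P := MeasurePreserving.symm θ herg.toMeasurePreserving
  set A : Set Ω := ⋂ k : ℕ, ⋃ n : ℕ, {ω | (k : ℝ) < Sg T g n ω} with hAdef
  have hAm : MeasurableSet A :=
    MeasurableSet.iInter fun k => MeasurableSet.iUnion fun n =>
      measurableSet_lt measurable_const (Sg_meas hTm hgm n)
  have hmemA : ∀ ω, ω ∈ A ↔ ∀ c : ℝ, ∃ n, c < Sg T g n ω := by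
    intro ω
    constructor
    · intro h c
      obtain ⟨k, hk⟩ := exists_nat_gt c
      obtain ⟨n, hn⟩ := Set.mem_iUnion.mp (Set.mem_iInter.mp h k)
      exact ⟨n, lt_trans hk hn⟩
    · intro h
      exact Set.mem_iInter.mpr fun k => Set.mem_iUnion.mpr (h (k : ℝ))
  have hTA : T ⁻¹' A = A := by
    ext ω
    simp only [Set.mem_preimage, hmemA]
    constructor
    · intro h c
      obtain ⟨n, hn⟩ := h (c - g ω)
      exact ⟨n + 1, by rw [Sg_succ']; linarith⟩
    · intro h c
      obtain ⟨m, hm⟩ := h (max (c + g ω) 0)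
      have hm0 : m ≠ 0 := by
        rintro rfl
        rw [Sg_zero] at hm
        exact absurd hm (not_lt.mpr (le_max_right _ _))
      obtain ⟨n, rfl⟩ := Nat.exists_eq_succ_of_ne_zero hm0
      refine ⟨n, ?_⟩
      have := Sg_succ' (T := T) (g := g) n ω
      have h2 : c + g ω < Sg T g (n + 1) ω := lt_of_le_of_lt (le_max_left _ _) hm
      linarith
  have hθA : ⇑θ ⁻¹' A = A := by
    have h1 : ⇑θ ⁻¹' (T ⁻¹' A) = A := by
      rw [← Set.preimage_comp]
      have h2 : T ∘ ⇑θ = id := funext fun ω => θ.symm_apply_apply ω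
      rw [h2, Set.preimage_id]
    rw [hTA] at h1
    exact h1
  rcases herg.toPreErgodic.measure_self_or_compl_eq_zero hAm hθA with h0 | h1
  · rw [ae_iff]
    refine measure_mono_null ?_ h0
    intro ω hω
    rw [Set.mem_setOf_eq] at hω
    push_neg at hω
    exact (hmemA ω).mpr fun c => by
      obtain ⟨n, hn⟩ := hω c
      exact ⟨n, hn⟩
  · exfalso
    set E : ℕ → Set Ω := fun n => {ω | 0 < Phi T g n ω} with hEdef
    have hEms : ∀ n, MeasurableSet (E n) := fun n =>
      measurableSet_lt measurable_const (Phi_meas hTm hgm n)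
    have hmono : Monotone E := monotone_nat_of_le_succ fun n ω hω =>
      lt_of_lt_of_le hω (Phi_le_succ n ω)
    have hsub : A ⊆ ⋃ n, E n := by
      intro ω hω
      obtain ⟨n, hn⟩ := (hmemA ω).mp hω 0
      exact Set.mem_iUnion.mpr ⟨n, lt_of_lt_of_le hn (Sg_le_Phi n n le_rfl ω)⟩
    have hcompl0 : P ((⋃ n, E n)ᶜ) = 0 :=
      measure_mono_null (Set.compl_subset_compl.mpr hsub) h1
    have htend := tendsto_setIntegral_of_monotone hEms hmono hgi.integrableOn
    have hU : ∫ ω in ⋃ n, E n, g ω ∂P = ∫ ω, g ω ∂P := by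
      have hsplit := integral_add_compl (MeasurableSet.iUnion hEms) hgi (f := g)
      have h2 : ∫ ω in (⋃ n, E n)ᶜ, g ω ∂P = 0 := by
        rw [Measure.restrict_eq_zero.mpr hcompl0, integral_zero_measure]
      linarith
    have hge : 0 ≤ ∫ ω, g ω ∂P := by
      rw [← hU]
      exact ge_of_tendsto' htend fun n => maximal P hTm hT hgm hgi n
    linarith

/-- Borel–Cantelli: sublinear growth of `f` along the orbit. -/
lemma eventually_sublinear (P : Measure Ω) [IsProbabilityMeasure P]
    (hTm : Measurable T) (hT : MeasurePreserving T P P)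
    {f : Ω → ℝ} (hfm : Measurable f) (hfi : Integrable f P) (hf0 : ∀ ω, 0 ≤ f ω)
    {ε : ℝ} (hε : 0 < ε) :
    ∀ᵐ ω ∂P, ∀ᶠ n in atTop, f (T^[n] ω) ≤ ε * n := by
  set s : ℕ → Set Ω := fun n => T^[n] ⁻¹' {ω | f ω / ε ∈ Set.Ioi (n : ℝ)} with hsdef
  have hBm : ∀ n : ℕ, MeasurableSet {ω | f ω / ε ∈ Set.Ioi (n : ℝ)} := fun n =>
    measurableSet_lt measurable_const (hfm.div_const ε)
  have hsum : (∑' n, P (s n)) ≠ ⊤ := by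
    have heq : ∀ n, P (s n) = P {ω | f ω / ε ∈ Set.Ioi (n : ℝ)} := fun n =>
      (hT.iterate n).measure_preimage (hBm n).nullMeasurableSet
    rw [tsum_congr heq]
    letI : MeasureSpace Ω := ⟨P⟩
    exact (ProbabilityTheory.tsum_prob_mem_Ioi_lt_top (hfi.div_const ε)
      (fun ω => div_nonneg (hf0 ω) hε.le)).ne
  filter_upwards [ae_eventually_notMem hsum] with ω hω
  refine hω.mono fun n hn => ?_
  have h1 : f (T^[n] ω) / ε ≤ n := by
    by_contra h
    exact hn (by simpa [hsdef] using lt_of_not_ge h)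
  calc f (T^[n] ω) = f (T^[n] ω) / ε * ε := by field_simp
  _ ≤ n * ε := by nlinarith
  _ = ε * n := mul_comm _ _

end LoynesAux

open LoynesAux in
/-- if E[V − τ] < 0 then M_∞ < ∞ P-a.s., i.e.
P( sup_{j ≥ 1} S_j < ∞ ) = 1. -/
theorem Minf_finite_as
    [MeasurableSpace Ω] (P : Measure Ω) [IsProbabilityMeasure P]
    (θ : Ω ≃ᵐ Ω) (herg : Ergodic (⇑θ) P)
    (σ D V τ : Ω → ℝ)
    (hσm : Measurable σ) (hDm : Measurable D) (hVm : Measurable V) (hτm : Measurable τ)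
    (hσ0 : ∀ ω, 0 ≤ σ ω) (hD0 : ∀ ω, 0 ≤ D ω) (hV0 : ∀ ω, 0 ≤ V ω) (hτ0 : ∀ ω, 0 ≤ τ ω)
    (hσi : Integrable σ P) (hDi : Integrable D P) (hVi : Integrable V P) (hτi : Integrable τ P)
    (hτpos : ∀ᵐ ω ∂P, 0 < τ ω)
    (hEV : ∫ ω, (V ω - τ ω) ∂P < 0) :
    ∀ᵐ ω ∂P, (⨆ j : ℕ, ((Sj (⇑θ.symm) σ D V τ (j + 1) ω : ℝ) : EReal)) < ⊤ := by
  classical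
  set T : Ω → Ω := ⇑θ.symm with hTdef
  have hTm : Measurable T := θ.symm.measurable
  have hT : MeasurePreserving T P P := MeasurePreserving.symm θ herg.toMeasurePreserving
  set g0 : Ω → ℝ := fun ω => V ω - τ ω with hg0def
  have hg0m : Measurable g0 := hVm.sub hτm
  have hg0i : Integrable g0 P := hVi.sub hτi
  set ε : ℝ := -(∫ ω, g0 ω ∂P) / 2 with hεdef
  have hε : 0 < ε := by
    have : ∫ ω, g0 ω ∂P < 0 := hEV
    simp only [hεdef]
    linarith
  set g1 : Ω → ℝ := fun ω => g0 ω + ε with hg1def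
  have hg1m : Measurable g1 := hg0m.add measurable_const
  have hg1i : Integrable g1 P := hg0i.add (integrable_const ε)
  have hg1int : ∫ ω, g1 ω ∂P < 0 := by
    have h1 : ∫ ω, g1 ω ∂P = (∫ ω, g0 ω ∂P) + ε := by
      simp only [hg1def]
      rw [integral_add hg0i (integrable_const ε), integral_const]
      simp [measure_univ]
    rw [h1]
    have : ∫ ω, g0 ω ∂P < 0 := hEV
    simp only [hεdef] at *
    linarith
  have h1 := bddAbove_Sg (g := g1) P θ herg hg1m hg1i hg1int
  have h2 := eventually_sublinear (f := fun ω => σ ω + D ω) P hTm hT (hσm.add hDm)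
    (hσi.add hDi) (fun ω => add_nonneg (hσ0 ω) (hD0 ω)) (half_pos hε)
  filter_upwards [h1, h2] with ω hc' hev
  obtain ⟨c, hc⟩ := hc'
  obtain ⟨N, hN⟩ := eventually_atTop.mp hev
  -- Express `Sj` in terms of Birkhoff sums
  have hIcc : ∀ m : ℕ, ∑ i ∈ Finset.Icc 1 m, g0 (T^[i] ω) = Sg T g0 (m + 1) ω - g0 ω := by
    intro m
    induction m with
    | zero => simp [Sg_zero, Sg]
    | succ m ih =>
      have hins : Finset.Icc 1 (m + 1) = insert (m + 1) (Finset.Icc 1 m) := by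
        ext i
        simp only [Finset.mem_Icc, Finset.mem_insert]
        omega
      rw [hins, Finset.sum_insert (by simp), ih]
      have : Sg T g0 (m + 1 + 1) ω = Sg T g0 (m + 1) ω + g0 (T^[m + 1] ω) := by
        unfold Sg
        rw [Finset.sum_range_succ]
      rw [this]
      ring
  have hSj : ∀ j : ℕ, Sj T σ D V τ (j + 1) ω
      = (σ (T^[j + 1] ω) + D (T^[j + 1] ω)) + (Sg T g0 (j + 2) ω - g0 ω) := by
    intro j
    have h3 : ∑ i ∈ Finset.Icc 1 (j + 1), V (T^[i] ω) - ∑ i ∈ Finset.Icc 1 (j + 1), τ (T^[i] ω)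
        = Sg T g0 (j + 2) ω - g0 ω := by
      rw [← Finset.sum_sub_distrib]
      exact hIcc (j + 1)
    show σ (T^[j + 1] ω) + D (T^[j + 1] ω) + ∑ i ∈ Finset.Icc 1 (j + 1), V (T^[i] ω)
        - ∑ i ∈ Finset.Icc 1 (j + 1), τ (T^[i] ω) = _
    linarith
  have hbound : ∀ j : ℕ, N ≤ j → Sj T σ D V τ (j + 1) ω ≤ c - g0 ω := by
    intro j hj
    have hA : σ (T^[j + 1] ω) + D (T^[j + 1] ω) ≤ ε / 2 * (j + 1) := by
      have := hN (j + 1) (le_trans hj (Nat.le_succ j))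
      simpa using this
    have hB : Sg T g0 (j + 2) ω ≤ c - (j + 2 : ℝ) * ε := by
      have hcc := hc (j + 2)
      have hSg1 : Sg T g1 (j + 2) ω = Sg T g0 (j + 2) ω + (j + 2 : ℝ) * ε := by
        unfold Sg
        simp only [hg1def]
        rw [Finset.sum_add_distrib, Finset.sum_const, Finset.card_range, nsmul_eq_mul]
        push_cast
        ring
      rw [hSg1] at hcc
      linarith
    rw [hSj j]
    have hj0 : (0 : ℝ) ≤ (j : ℝ) := Nat.cast_nonneg j
    nlinarith
  obtain ⟨B, hB⟩ : ∃ B : ℝ, ∀ j, Sj T σ D V τ (j + 1) ω ≤ B := by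
    refine ⟨max (c - g0 ω)
      (((Finset.range (N + 1)).image fun j => Sj T σ D V τ (j + 1) ω).max' (by simp)), fun j => ?_⟩
    rcases le_or_gt N j with h | h
    · exact le_trans (hbound j h) (le_max_left _ _)
    · refine le_trans (Finset.le_max' _ _ ?_) (le_max_right _ _)
      exact Finset.mem_image.mpr ⟨j, Finset.mem_range.mpr (by omega), rfl⟩
  have hsup : (⨆ j : ℕ, ((Sj T σ D V τ (j + 1) ω : ℝ) : EReal)) ≤ (B : EReal) :=
    iSup_le fun j => EReal.coe_le_coe_iff.mpr (hB j)
  exact lt_of_le_of_lt hsup (EReal.coe_lt_top B)
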